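/- Let G = (I ∪ J, E) be a balanced bipartite graph without isolated vertices, and let S ⊆ I be a nonempty set that is inclusion-wise minimal with the property |S| ≥ |N(S)|. Then the subgraph induced by the closed neighborhood N[S] is connected. -/
import Mathlib

/-- `S` is an independent set in `G`. -/
def IsIndepSet {V : Type*} (G : SimpleGraph V) (S : Finset V) : Prop :=
  ∀ u ∈ S, ∀ v ∈ S, ¬ G.Adj u v

/-- The open neighborhood of a vertex set `S` in `G`. -/
def nbhd {V : Type*} [Fintype V] [DecidableEq V] (G : SimpleGraph V) [DecidableRel G.Adj]
    (S : Finset V) : Finset V :=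
  (S.biUnion fun v => G.neighborFinset v) \ S

/-- in a balanced bipartite graph without isolated vertices, if `S ⊆ I` is
nonempty and inclusion-wise minimal with `|N(S)| ≤ |S|`, then the subgraph induced by
the closed neighborhood `N[S] = S ∪ N(S)` is connected. -/
theorem minimal_set_closed_nbhd_connected {V : Type*} [Fintype V] [DecidableEq V]
    (G : SimpleGraph V) [DecidableRel G.Adj] (I J : Finset V)
    (hpart : I ∪ J = Finset.univ) (hdisj : Disjoint I J)
    (hIind : IsIndepSet G I) (hJind : IsIndepSet G J) (hbal : I.card = J.card)
    (hnoiso : ∀ v : V, ∃ w, G.Adj v w)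
    (S : Finset V) (hSI : S ⊆ I) (hSne : S.Nonempty)
    (hS : (nbhd G S).card ≤ S.card)
    (hmin : ∀ S' ⊆ S, S'.Nonempty → S' ≠ S → ¬ ((nbhd G S').card ≤ S'.card)) :
    (G.induce (↑(S ∪ nbhd G S) : Set V)).Connected := by
  classical
  set T : Finset V := S ∪ nbhd G S with hTdef
  have hST : S ⊆ T := Finset.subset_union_left
  have hNT : nbhd G S ⊆ T := Finset.subset_union_right
  -- neighbors of S are outside S
  have hout : ∀ w s, s ∈ S → G.Adj s w → w ∉ S := by
    intro w s hs hadj hw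
    exact hIind s (hSI hs) w (hSI hw) hadj
  have hmemN : ∀ w s, s ∈ S → G.Adj s w → w ∈ nbhd G S := by
    intro w s hs hadj
    simp only [nbhd, Finset.mem_sdiff, Finset.mem_biUnion]
    exact ⟨⟨s, hs, (G.mem_neighborFinset s w).2 hadj⟩, hout w s hs hadj⟩
  have hmemN' : ∀ w, w ∈ nbhd G S → ∃ s ∈ S, G.Adj s w := by
    intro w hw
    simp only [nbhd, Finset.mem_sdiff, Finset.mem_biUnion, SimpleGraph.mem_neighborFinset] at hw
    exact hw.1
  -- induced adjacency from actual adjacency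
  have hindadj : ∀ (a b : V) (ha : a ∈ T) (hb : b ∈ T), G.Adj a b →
      (G.induce (↑T : Set V)).Adj ⟨a, by simpa using ha⟩ ⟨b, by simpa using hb⟩ := by
    intro a b ha hb hadj
    exact hadj
  obtain ⟨s0, hs0⟩ := hSne
  rw [SimpleGraph.connected_iff]
  refine ⟨?_, ⟨⟨s0, by simpa using hST hs0⟩⟩⟩
  intro u v
  by_contra hreach
  -- each vertex of T reaches some vertex of S
  have hreachS : ∀ (x : (↑T : Set V)), ∃ s, ∃ hs : s ∈ S,
      (G.induce (↑T : Set V)).Reachable x ⟨s, by simpa using hST hs⟩ := by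
    intro x
    have hx : (x : V) ∈ T := by simpa using x.2
    rcases Finset.mem_union.1 hx with h | h
    · exact ⟨x, h, SimpleGraph.Reachable.refl _⟩
    · obtain ⟨s, hs, hadj⟩ := hmemN' x h
      exact ⟨s, hs, (hindadj s x (hST hs) (hNT h) hadj).reachable.symm⟩
  obtain ⟨su, hsu, hru⟩ := hreachS u
  obtain ⟨sv, hsv, hrv⟩ := hreachS v
  -- P x : x reachable from su inside induced graph
  set P : V → Prop := fun x => ∃ hx : x ∈ T,
    (G.induce (↑T : Set V)).Reachable ⟨su, by simpa using hST hsu⟩ ⟨x, by simpa using hx⟩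
    with hPdef
  have hPsu : P su := ⟨hST hsu, SimpleGraph.Reachable.refl _⟩
  have hPsv : ¬ P sv := by
    rintro ⟨hx, hr⟩
    exact hreach (hru.trans (hr.trans hrv.symm))
  -- edge transfer for P
  have hPedge : ∀ a b, a ∈ T → b ∈ T → G.Adj a b → (P a ↔ P b) := by
    intro a b ha hb hadj
    constructor
    · rintro ⟨_, hr⟩; exact ⟨hb, hr.trans (hindadj a b ha hb hadj).reachable⟩
    · rintro ⟨_, hr⟩; exact ⟨ha, hr.trans (hindadj b a hb ha hadj.symm).reachable⟩
  set S1 : Finset V := S.filter P with hS1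
  set S2 : Finset V := S.filter (fun x => ¬ P x) with hS2
  have hN1 : nbhd G S1 ⊆ (nbhd G S).filter P := by
    intro w hw
    simp only [nbhd, Finset.mem_sdiff, Finset.mem_biUnion, SimpleGraph.mem_neighborFinset] at hw
    obtain ⟨⟨s, hs, hadj⟩, _⟩ := hw
    have hsS : s ∈ S := (Finset.mem_filter.1 hs).1
    have hPs : P s := (Finset.mem_filter.1 hs).2
    have hwN : w ∈ nbhd G S := hmemN w s hsS hadj
    exact Finset.mem_filter.2 ⟨hwN, (hPedge s w (hST hsS) (hNT hwN) hadj).1 hPs⟩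
  have hN2 : nbhd G S2 ⊆ (nbhd G S).filter (fun x => ¬ P x) := by
    intro w hw
    simp only [nbhd, Finset.mem_sdiff, Finset.mem_biUnion, SimpleGraph.mem_neighborFinset] at hw
    obtain ⟨⟨s, hs, hadj⟩, _⟩ := hw
    have hsS : s ∈ S := (Finset.mem_filter.1 hs).1
    have hPs : ¬ P s := (Finset.mem_filter.1 hs).2
    have hwN : w ∈ nbhd G S := hmemN w s hsS hadj
    exact Finset.mem_filter.2 ⟨hwN, fun hPw =>
      hPs ((hPedge s w (hST hsS) (hNT hwN) hadj).2 hPw)⟩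
  have hsum : (nbhd G S1).card + (nbhd G S2).card ≤ (nbhd G S).card := by
    calc (nbhd G S1).card + (nbhd G S2).card
        ≤ ((nbhd G S).filter P).card + ((nbhd G S).filter (fun x => ¬ P x)).card :=
          Nat.add_le_add (Finset.card_le_card hN1) (Finset.card_le_card hN2)
      _ = (nbhd G S).card := Finset.card_filter_add_card_filter_not _
  have hScard : S1.card + S2.card = S.card :=
    Finset.card_filter_add_card_filter_not _
  have h1 : ¬ ((nbhd G S1).card ≤ S1.card) :=
    hmin S1 (Finset.filter_subset _ _) ⟨su, Finset.mem_filter.2 ⟨hsu, hPsu⟩⟩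
      (fun h => hPsv (by rw [← h] at hsv; exact (Finset.mem_filter.1 hsv).2)) 
  have h2 : ¬ ((nbhd G S2).card ≤ S2.card) :=
    hmin S2 (Finset.filter_subset _ _) ⟨sv, Finset.mem_filter.2 ⟨hsv, hPsv⟩⟩
      (fun h => (by rw [← h] at hsu; exact (Finset.mem_filter.1 hsu).2 : ¬ P su) hPsu)
  omega
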